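/- Let φ be a flow on a compact metric space M and let C be the closure of the union of the supports of all φ-invariant ergodic Borel probability measures. Then C is an attracting center for φ; that is, for every x ∈ M, lim_{δ→0} liminf_{t→+∞} (1/t)∫₀ᵗ χ_{B(C,δ)}(φ_s(x)) ds = 1, where B(C,δ) = {y ∈ M : dist(y,C) < δ} and χ_A denotes the indicator function of a set A. -/

import Mathlib

open MeasureTheory

/-- The (topological) support of a measure: the set of points all of whose open
neighbourhoods have positive measure. -/
def measureSupport {M : Type*} [TopologicalSpace M] [MeasurableSpace M]
    (μ : Measure M) : Set M :=
  {x : M | ∀ U : Set M, IsOpen U → x ∈ U → 0 < μ U}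

open MeasureTheory TopologicalSpace Set Filter Topology
open scoped NNReal ENNReal

set_option linter.unusedSectionVars false
set_option maxHeartbeats 1000000

namespace AttractingCenter

variable {M : Type*} [MetricSpace M] [CompactSpace M]

/-- Positivity of a functional on `C(M, ℝ)`. -/
def IsPosF (Λ : C(M, ℝ) →L[ℝ] ℝ) : Prop := ∀ f : C(M, ℝ), (∀ y, 0 ≤ f y) → 0 ≤ Λ f

lemma IsPosF.mono {Λ : C(M, ℝ) →L[ℝ] ℝ} (h : IsPosF Λ) {f g : C(M, ℝ)}
    (hfg : ∀ y, f y ≤ g y) : Λ f ≤ Λ g := by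
  have h0 : (0:ℝ) ≤ Λ (g - f) := h _ fun y => by
    simpa [ContinuousMap.sub_apply] using sub_nonneg.2 (hfg y)
  have h1 : Λ (g - f) = Λ g - Λ f := by simp
  linarith

/-- Test functions for a set `K`: nonnegative continuous functions that are `≥ 1` on `K`. -/
def tests (K : Set M) : Set C(M, ℝ) := {f | (∀ y, 0 ≤ f y) ∧ ∀ y ∈ K, 1 ≤ f y}

lemma one_mem_tests (K : Set M) : (1 : C(M, ℝ)) ∈ tests K :=
  ⟨fun _ => zero_le_one, fun _ _ => le_refl 1⟩

variable (Λ : C(M, ℝ) →L[ℝ] ℝ)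

/-- The Riesz content associated to a positive functional. -/
noncomputable def rCont (K : Compacts M) : ℝ≥0 :=
  sInf ((fun f : C(M, ℝ) => (Λ f).toNNReal) '' tests (K : Set M))

lemma rCont_image_nonempty (K : Compacts M) :
    ((fun f : C(M, ℝ) => (Λ f).toNNReal) '' tests (K : Set M)).Nonempty :=
  ⟨_, Set.mem_image_of_mem _ (one_mem_tests _)⟩

lemma rCont_le {K : Compacts M} {f : C(M, ℝ)} (hf : f ∈ tests (K : Set M)) :
    rCont Λ K ≤ (Λ f).toNNReal :=
  csInf_le (OrderBot.bddBelow _) ⟨f, hf, rfl⟩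

lemma exists_test_lt (K : Compacts M) {ε : ℝ≥0} (hε : 0 < ε) :
    ∃ f ∈ tests (K : Set M), (Λ f).toNNReal < rCont Λ K + ε := by
  obtain ⟨r, ⟨f, hf, rfl⟩, hr⟩ := exists_lt_of_csInf_lt (rCont_image_nonempty Λ K)
    (lt_add_of_pos_right (rCont Λ K) hε)
  exact ⟨f, hf, hr⟩

lemma rCont_mono {K₁ K₂ : Compacts M} (h : (K₁ : Set M) ⊆ K₂) :
    rCont Λ K₁ ≤ rCont Λ K₂ := by
  apply csInf_le_csInf (OrderBot.bddBelow _) (rCont_image_nonempty Λ K₂)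
  exact Set.image_mono fun f hf => ⟨hf.1, fun y hy => hf.2 y (h hy)⟩

lemma rCont_sup_le (K₁ K₂ : Compacts M) :
    rCont Λ (K₁ ⊔ K₂) ≤ rCont Λ K₁ + rCont Λ K₂ := by
  refine le_of_forall_pos_le_add fun ε hε => ?_
  obtain ⟨f₁, hf₁, hΛ₁⟩ := exists_test_lt Λ K₁ (half_pos hε)
  obtain ⟨f₂, hf₂, hΛ₂⟩ := exists_test_lt Λ K₂ (half_pos hε)
  have hmem : f₁ + f₂ ∈ tests ((K₁ ⊔ K₂ : Compacts M) : Set M) := by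
    constructor
    · intro y; simpa using add_nonneg (hf₁.1 y) (hf₂.1 y)
    · rintro y (hy | hy)
      · have := hf₁.2 y hy
        have := hf₂.1 y
        simp only [ContinuousMap.add_apply]; linarith
      · have := hf₂.2 y hy
        have := hf₁.1 y
        simp only [ContinuousMap.add_apply]; linarith
  calc rCont Λ (K₁ ⊔ K₂) ≤ (Λ (f₁ + f₂)).toNNReal := rCont_le Λ hmem
    _ = (Λ f₁ + Λ f₂).toNNReal := by simp
    _ ≤ (Λ f₁).toNNReal + (Λ f₂).toNNReal := Real.toNNReal_add_le
    _ ≤ (rCont Λ K₁ + ε / 2) + (rCont Λ K₂ + ε / 2) := add_le_add hΛ₁.le hΛ₂.le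
    _ = rCont Λ K₁ + rCont Λ K₂ + ε := by
        rw [add_assoc, add_comm (ε/2), add_assoc, add_halves, add_assoc]

lemma rCont_sup_disjoint (hpos : IsPosF Λ) (K₁ K₂ : Compacts M)
    (hd : Disjoint (K₁ : Set M) (K₂ : Set M)) :
    rCont Λ (K₁ ⊔ K₂) = rCont Λ K₁ + rCont Λ K₂ := by
  refine le_antisymm (rCont_sup_le Λ K₁ K₂) ?_
  rcases Set.eq_empty_or_nonempty (K₁ : Set M) with h₁ | h₁
  · have h₂ : ((K₁ ⊔ K₂ : Compacts M) : Set M) = (K₂ : Set M) := by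
      simp [Compacts.coe_sup, h₁]
    have : rCont Λ ⊥ = 0 := by
      refine le_antisymm ?_ (zero_le)
      have h0 : (0 : C(M, ℝ)) ∈ tests ((⊥ : Compacts M) : Set M) :=
        ⟨fun _ => le_refl 0, fun y hy => absurd hy (by simp [Compacts.coe_bot])⟩
      simpa using rCont_le Λ h0
    have e1 : rCont Λ K₁ = 0 := by
      refine le_antisymm ?_ (zero_le)
      rw [← this]
      exact rCont_mono Λ (by simp [h₁, Compacts.coe_bot])
    have e2 : rCont Λ (K₁ ⊔ K₂) = rCont Λ K₂ :=
      le_antisymm (rCont_mono Λ (le_of_eq h₂)) (rCont_mono Λ (ge_of_eq h₂))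
    rw [e1, e2, zero_add]
  rcases Set.eq_empty_or_nonempty (K₂ : Set M) with h₂ | h₂
  · have h₁' : ((K₁ ⊔ K₂ : Compacts M) : Set M) = (K₁ : Set M) := by
      simp [Compacts.coe_sup, h₂]
    have : rCont Λ ⊥ = 0 := by
      refine le_antisymm ?_ (zero_le)
      have h0 : (0 : C(M, ℝ)) ∈ tests ((⊥ : Compacts M) : Set M) :=
        ⟨fun _ => le_refl 0, fun y hy => absurd hy (by simp [Compacts.coe_bot])⟩
      simpa using rCont_le Λ h0
    have e2 : rCont Λ K₂ = 0 := by
      refine le_antisymm ?_ (zero_le)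
      rw [← this]
      exact rCont_mono Λ (by simp [h₂, Compacts.coe_bot])
    have e1 : rCont Λ (K₁ ⊔ K₂) = rCont Λ K₁ :=
      le_antisymm (rCont_mono Λ (le_of_eq h₁')) (rCont_mono Λ (ge_of_eq h₁'))
    rw [e1, e2, add_zero]
  -- both nonempty: use the explicit Urysohn function
  have hden : ∀ y : M, 0 < Metric.infDist y (K₁ : Set M) + Metric.infDist y (K₂ : Set M) := by
    intro y
    rcases (Metric.infDist_nonneg (s := (K₁ : Set M)) (x := y)).lt_or_eq with h | h
    · exact add_pos_of_pos_of_nonneg h Metric.infDist_nonneg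
    · rcases (Metric.infDist_nonneg (s := (K₂ : Set M)) (x := y)).lt_or_eq with h' | h'
      · exact add_pos_of_nonneg_of_pos Metric.infDist_nonneg h'
      · exfalso
        have hy₁ : y ∈ (K₁ : Set M) :=
          ((K₁.isCompact.isClosed.mem_iff_infDist_zero h₁).2 h.symm)
        have hy₂ : y ∈ (K₂ : Set M) :=
          ((K₂.isCompact.isClosed.mem_iff_infDist_zero h₂).2 h'.symm)
        exact Set.disjoint_left.1 hd hy₁ hy₂
  set u : C(M, ℝ) := ⟨fun y => Metric.infDist y (K₁ : Set M) /
      (Metric.infDist y (K₁ : Set M) + Metric.infDist y (K₂ : Set M)),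
    (Metric.continuous_infDist_pt _).div
      ((Metric.continuous_infDist_pt _).add (Metric.continuous_infDist_pt _))
      (fun y => (hden y).ne')⟩ with hu
  have hu0 : ∀ y, 0 ≤ u y := fun y => div_nonneg Metric.infDist_nonneg (hden y).le
  have hu1 : ∀ y, u y ≤ 1 := fun y => by
    rw [hu]
    simp only [ContinuousMap.coe_mk]
    rw [div_le_one (hden y)]
    have := Metric.infDist_nonneg (s := (K₂ : Set M)) (x := y)
    linarith
  have huK₁ : ∀ y ∈ (K₁ : Set M), u y = 0 := by
    intro y hy
    have : Metric.infDist y (K₁ : Set M) = 0 := Metric.infDist_zero_of_mem hy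
    rw [hu]; simp [this]
  have huK₂ : ∀ y ∈ (K₂ : Set M), u y = 1 := by
    intro y hy
    have h2 : Metric.infDist y (K₂ : Set M) = 0 := Metric.infDist_zero_of_mem hy
    rw [hu]
    simp only [ContinuousMap.coe_mk, h2, add_zero]
    have h1 : Metric.infDist y (K₁ : Set M) ≠ 0 := by
      intro h0
      exact Set.disjoint_left.1 hd
        ((K₁.isCompact.isClosed.mem_iff_infDist_zero h₁).2 h0) hy
    field_simp
  -- now show the lower bound
  refine le_csInf (rCont_image_nonempty Λ _) ?_
  rintro r ⟨f, hf, rfl⟩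
  have hsplit : f * (1 - u) + f * u = f := by ring
  have hmem₁ : f * (1 - u) ∈ tests (K₁ : Set M) := by
    constructor
    · intro y
      simp only [ContinuousMap.mul_apply, ContinuousMap.sub_apply, ContinuousMap.one_apply]
      exact mul_nonneg (hf.1 y) (by linarith [hu1 y])
    · intro y hy
      have := hf.2 y (Set.mem_union_left _ hy)
      simp only [ContinuousMap.mul_apply, ContinuousMap.sub_apply, ContinuousMap.one_apply,
        huK₁ y hy]
      linarith
  have hmem₂ : f * u ∈ tests (K₂ : Set M) := by
    constructor
    · intro y
      simp only [ContinuousMap.mul_apply]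
      exact mul_nonneg (hf.1 y) (hu0 y)
    · intro y hy
      have := hf.2 y (Set.mem_union_right _ hy)
      simp only [ContinuousMap.mul_apply, huK₂ y hy, mul_one]
      exact hf.2 y (Set.mem_union_right _ hy)
  have key : rCont Λ K₁ + rCont Λ K₂ ≤ (Λ (f * (1 - u))).toNNReal + (Λ (f * u)).toNNReal :=
    add_le_add (rCont_le Λ hmem₁) (rCont_le Λ hmem₂)
  refine key.trans (le_of_eq ?_)
  have p₁ : 0 ≤ Λ (f * (1 - u)) := hpos _ hmem₁.1
  have p₂ : 0 ≤ Λ (f * u) := hpos _ hmem₂.1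
  have : Λ (f * (1 - u)) + Λ (f * u) = Λ f := by
    rw [← map_add, hsplit]
  rw [← Real.toNNReal_add p₁ p₂, this]

/-- The Riesz content as a `Content`. -/
noncomputable def rieszContent (hpos : IsPosF Λ) : Content M where
  toFun := rCont Λ
  mono' := fun _ _ h => rCont_mono Λ h
  sup_disjoint' := fun K₁ K₂ hd _ _ => rCont_sup_disjoint Λ hpos K₁ K₂ hd
  sup_le' := fun K₁ K₂ => rCont_sup_le Λ K₁ K₂

end AttractingCenter

namespace AttractingCenter

variable {M : Type*} [MetricSpace M] [CompactSpace M] [MeasurableSpace M] [BorelSpace M]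

lemma cm_integrable (μ : Measure M) [IsFiniteMeasure μ] (f : C(M, ℝ)) :
    Integrable (fun y => f y) μ :=
  f.continuous.integrable_of_hasCompactSupport
    (IsCompact.of_isClosed_subset isCompact_univ (isClosed_tsupport _) (Set.subset_univ _))

variable (Λ : C(M, ℝ) →L[ℝ] ℝ)

/-- The measure associated to a positive functional via the Riesz content. -/
noncomputable def rieszMeasure (hpos : IsPosF Λ) : Measure M :=
  (rieszContent Λ hpos).measure

lemma content_le_measure_open (hpos : IsPosF Λ) {U : Set M} (hU : IsOpen U)
    (K : Compacts M) (hKU : (K : Set M) ⊆ U) :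
    (rCont Λ K : ℝ≥0∞) ≤ rieszMeasure Λ hpos U := by
  rw [rieszMeasure, Content.measure_apply _ hU.measurableSet,
    Content.outerMeasure_of_isOpen _ U hU]
  exact (rieszContent Λ hpos).le_innerContent K ⟨U, hU⟩ hKU

lemma measure_le_test (hpos : IsPosF Λ) {K : Compacts M} {f : C(M, ℝ)}
    (hf : f ∈ tests (K : Set M)) :
    rieszMeasure Λ hpos (K : Set M) ≤ ENNReal.ofReal (Λ f) := by
  have key : ∀ ε : ℝ, 0 < ε → ε < 1 →
      rieszMeasure Λ hpos (K : Set M) ≤ ENNReal.ofReal ((1 - ε)⁻¹ * Λ f) := by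
    intro ε hε hε1
    set U : Set M := {y | 1 - ε < f y} with hUdef
    have hU : IsOpen U := isOpen_lt continuous_const f.continuous
    have hKU : (K : Set M) ⊆ U := fun y hy => by
      have := hf.2 y hy
      simp only [hUdef, Set.mem_setOf_eq]; linarith
    have step1 : rieszMeasure Λ hpos (K : Set M) ≤ rieszMeasure Λ hpos U :=
      measure_mono hKU
    have step2 : rieszMeasure Λ hpos U =
        (rieszContent Λ hpos).innerContent ⟨U, hU⟩ := by
      rw [rieszMeasure, Content.measure_apply _ hU.measurableSet,
        Content.outerMeasure_of_isOpen _ U hU]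
    have step3 : (rieszContent Λ hpos).innerContent ⟨U, hU⟩ ≤
        ENNReal.ofReal ((1 - ε)⁻¹ * Λ f) := by
      refine iSup₂_le fun K' hK' => ?_
      have hmem : (1 - ε)⁻¹ • f ∈ tests (K' : Set M) := by
        constructor
        · intro y
          have := hf.1 y
          have h1 : (0:ℝ) ≤ (1 - ε)⁻¹ := inv_nonneg.2 (by linarith)
          simpa using mul_nonneg h1 this
        · intro y hy
          have hy' : 1 - ε < f y := hK' hy
          have h1 : (0:ℝ) < 1 - ε := by linarith
          simp only [ContinuousMap.smul_apply, smul_eq_mul]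
          calc (1:ℝ) = (1 - ε)⁻¹ * (1 - ε) := (inv_mul_cancel₀ h1.ne').symm
            _ ≤ (1 - ε)⁻¹ * f y := mul_le_mul_of_nonneg_left hy'.le (inv_nonneg.2 h1.le)
      have hle : rCont Λ K' ≤ ((1 - ε)⁻¹ * Λ f).toNNReal := by
        have := rCont_le Λ hmem
        simpa using this
      calc ((rieszContent Λ hpos) K' : ℝ≥0∞) = (rCont Λ K' : ℝ≥0∞) := rfl
        _ ≤ ((((1 - ε)⁻¹ * Λ f).toNNReal : ℝ≥0) : ℝ≥0∞) := by exact_mod_cast hle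
        _ = ENNReal.ofReal ((1 - ε)⁻¹ * Λ f) := rfl
    exact step1.trans (step2.le.trans step3)
  -- pass to the limit ε → 0
  have heps : Tendsto (fun n : ℕ => ((n : ℝ) + 2)⁻¹) atTop (nhds 0) :=
    (Filter.tendsto_atTop_add_const_right atTop 2 tendsto_natCast_atTop_atTop).inv_tendsto_atTop
  have h1 : Tendsto (fun n : ℕ => ((1 : ℝ) - ((n : ℝ) + 2)⁻¹)⁻¹ * Λ f) atTop
      (nhds (Λ f)) := by
    have h2 : Tendsto (fun n : ℕ => (1 : ℝ) - ((n : ℝ) + 2)⁻¹) atTop (nhds 1) := by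
      have := (tendsto_const_nhds (x := (1:ℝ)) (f := atTop (α := ℕ))).sub heps
      simpa using this
    have h3 := (h2.inv₀ one_ne_zero).mul (tendsto_const_nhds (x := Λ f))
    simpa using h3
  have h4 : Tendsto (fun n : ℕ => ENNReal.ofReal (((1 : ℝ) - ((n : ℝ) + 2)⁻¹)⁻¹ * Λ f)) atTop
      (nhds (ENNReal.ofReal (Λ f))) := (ENNReal.continuous_ofReal.tendsto _).comp h1
  refine ge_of_tendsto' h4 fun n => ?_
  have hn0 : (0 : ℝ) < ((n : ℝ) + 2)⁻¹ := by positivity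
  have hn1 : ((n : ℝ) + 2)⁻¹ < 1 := by
    rw [inv_lt_one_iff₀]
    right; linarith [Nat.cast_nonneg (α := ℝ) n]
  exact key _ hn0 hn1

lemma rieszMeasure_univ (hpos : IsPosF Λ) (hone : Λ 1 = 1) :
    rieszMeasure Λ hpos Set.univ = 1 := by
  have hle : rieszMeasure Λ hpos Set.univ ≤ 1 := by
    have := measure_le_test Λ hpos (K := ⊤) (one_mem_tests _)
    simpa [hone, Compacts.coe_top] using this
  have hge : (1 : ℝ≥0∞) ≤ rieszMeasure Λ hpos Set.univ := by
    have h1 : (1 : ℝ≥0) ≤ rCont Λ ⊤ := by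
      refine le_csInf (rCont_image_nonempty Λ ⊤) ?_
      rintro r ⟨f, hf, rfl⟩
      have : Λ 1 ≤ Λ f := IsPosF.mono hpos fun y => by
        simpa using hf.2 y (by simp [Compacts.coe_top])
      rw [hone] at this
      simpa using Real.one_le_toNNReal.2 this
    have h2 := content_le_measure_open Λ hpos isOpen_univ ⊤ (by simp [Compacts.coe_top])
    calc (1 : ℝ≥0∞) ≤ (rCont Λ ⊤ : ℝ≥0∞) := by exact_mod_cast h1
      _ ≤ rieszMeasure Λ hpos Set.univ := by simpa [Compacts.coe_top] using h2
  exact le_antisymm hle hge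

theorem rieszMeasure_prob (hpos : IsPosF Λ) (hone : Λ 1 = 1) :
    IsProbabilityMeasure (rieszMeasure Λ hpos) :=
  ⟨rieszMeasure_univ Λ hpos hone⟩

end AttractingCenter

namespace AttractingCenter

/-! ### Arithmetic helper lemmas -/

lemma sum_indicator_eq_of_le (n : ℕ) (t : ℝ) (hn : (n : ℝ) ≤ t) :
    ∑ k ∈ Finset.range n, (if ((k : ℝ) + 1) ≤ t then (1:ℝ) else 0) = n := by
  rw [Finset.sum_congr rfl (fun k hk => ?_), Finset.sum_const, Finset.card_range,
    nsmul_eq_mul, mul_one]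
  rw [if_pos]
  have hk' : (k : ℝ) + 1 ≤ n := by
    have := Finset.mem_range.1 hk
    exact_mod_cast Nat.succ_le_of_lt this
  linarith

lemma sum_indicator_le_min (n : ℕ) (t : ℝ) (h0 : 0 ≤ t) :
    ∑ k ∈ Finset.range n, (if ((k : ℝ) + 1) ≤ t then (1:ℝ) else 0) ≤ min t n := by
  induction n with
  | zero => simpa using le_min h0 le_rfl
  | succ n ih =>
    rw [Finset.sum_range_succ]
    by_cases h : ((n : ℝ) + 1) ≤ t
    · rw [if_pos h]
      have hmn : min t (n : ℝ) = n := min_eq_right (by linarith)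
      have h2 : min t ((n : ℝ) + 1) = (n : ℝ) + 1 := min_eq_right (by linarith)
      push_cast
      rw [h2]
      have := ih.trans_eq hmn
      linarith
    · rw [if_neg h, add_zero]
      refine ih.trans (min_le_min le_rfl ?_)
      push_cast
      linarith

lemma sum_indicator_le (n : ℕ) (t : ℝ) (h0 : 0 ≤ t) :
    ∑ k ∈ Finset.range n, (if ((k : ℝ) + 1) ≤ t then (1:ℝ) else 0) ≤ t :=
  (sum_indicator_le_min n t h0).trans (min_le_left _ _)

lemma le_sum_indicator (n : ℕ) (t : ℝ) (hn : t ≤ n) :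
    t - 1 ≤ ∑ k ∈ Finset.range n, (if ((k : ℝ) + 1) ≤ t then (1:ℝ) else 0) := by
  induction n with
  | zero =>
    simp only [Nat.cast_zero] at hn
    simpa using by linarith
  | succ n ih =>
    rw [Finset.sum_range_succ]
    by_cases h : t ≤ (n : ℝ)
    · have := ih h
      have hterm : (0:ℝ) ≤ if ((n : ℝ) + 1) ≤ t then (1:ℝ) else 0 := by
        split_ifs <;> norm_num
      linarith
    · push_neg at h
      rw [sum_indicator_eq_of_le n t h.le]
      have hterm : (0:ℝ) ≤ if ((n : ℝ) + 1) ≤ t then (1:ℝ) else 0 := by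
        split_ifs <;> norm_num
      push_cast at hn
      linarith

lemma sum_clamp_eq (n : ℕ) (t : ℝ) (h0 : 0 ≤ t) (hn : t ≤ n) :
    ∑ k ∈ Finset.range n, min 1 (max 0 (t - k)) = t := by
  induction n with
  | zero =>
    simp only [Nat.cast_zero] at hn
    have : t = 0 := le_antisymm hn h0
    simp [this]
  | succ n ih =>
    rw [Finset.sum_range_succ]
    by_cases h : t ≤ (n : ℝ)
    · have hterm : min 1 (max 0 (t - n)) = 0 := by
        rw [max_eq_left (by linarith), min_eq_right zero_le_one]
      rw [ih h, hterm, add_zero]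
    · push_neg at h
      have hmain : ∀ k ∈ Finset.range n, min 1 (max 0 (t - k)) = 1 := by
        intro k hk
        have hk' : (k : ℝ) + 1 ≤ n := by
          have := Finset.mem_range.1 hk
          exact_mod_cast Nat.succ_le_of_lt this
        have h1 : (1:ℝ) ≤ t - k := by linarith
        rw [max_eq_right (by linarith), min_eq_left h1]
      rw [Finset.sum_congr rfl hmain, Finset.sum_const, Finset.card_range, nsmul_eq_mul, mul_one]
      push_cast at hn
      have h2 : max 0 (t - n) = t - n := max_eq_right (by linarith)
      have h3 : min 1 (t - n) = t - n := min_eq_right (by linarith)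
      rw [h2, h3]
      ring

end AttractingCenter

namespace AttractingCenter

variable {M : Type*} [MetricSpace M] [CompactSpace M] [MeasurableSpace M] [BorelSpace M]
variable (Λ : C(M, ℝ) →L[ℝ] ℝ)

theorem integral_riesz_aux (hpos : IsPosF Λ) (hone : Λ 1 = 1) (f : C(M, ℝ))
    (hf0 : ∀ y, 0 ≤ f y) (hf1 : ∀ y, f y ≤ 1) :
    ∫ y, f y ∂(rieszMeasure Λ hpos) = Λ f := by
  set μ := rieszMeasure Λ hpos with hμ
  haveI : IsProbabilityMeasure μ := rieszMeasure_prob Λ hpos hone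
  have key : ∀ n : ℕ, 1 ≤ n → |Λ f - ∫ y, f y ∂μ| ≤ 3 / n := by
    intro n hn
    have hnpos : (0:ℝ) < n := by exact_mod_cast hn
    -- the clamp functions
    set g : ℕ → C(M, ℝ) := fun k =>
      ⟨fun y => min 1 (max 0 ((n : ℝ) * f y - k)),
        continuous_const.min (continuous_const.max
          (((continuous_const.mul f.continuous)).sub continuous_const))⟩ with hg
    have hg_apply : ∀ k y, g k y = min 1 (max 0 ((n : ℝ) * f y - k)) := fun k y => rfl
    have hg_nonneg : ∀ k y, 0 ≤ g k y := fun k y =>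
      le_min zero_le_one (le_max_left _ _)
    have hg_le_one : ∀ k y, g k y ≤ 1 := fun k y => min_le_left _ _
    have htf : ∀ y, 0 ≤ (n : ℝ) * f y ∧ (n : ℝ) * f y ≤ n := fun y =>
      ⟨mul_nonneg hnpos.le (hf0 y), by
        have := mul_le_mul_of_nonneg_left (hf1 y) hnpos.le
        simpa using this⟩
    -- sum of clamps equals n • f
    have hsumg : ∑ k ∈ Finset.range n, Λ (g k) = (n : ℝ) * Λ f := by
      have hsum : ∑ k ∈ Finset.range n, g k = (n : ℝ) • f := by
        ext y
        rw [ContinuousMap.sum_apply]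
        simp only [hg_apply, ContinuousMap.smul_apply, smul_eq_mul]
        exact sum_clamp_eq n ((n : ℝ) * f y) (htf y).1 (htf y).2
      rw [← map_sum, hsum, _root_.map_smul, smul_eq_mul]
    -- the closed sets
    set A : ℕ → Set M := fun j => {y | (j : ℝ) ≤ (n : ℝ) * f y} with hA
    have hA_closed : ∀ j, IsClosed (A j) := fun j =>
      isClosed_le continuous_const (continuous_const.mul f.continuous)
    have hA_compact : ∀ j, IsCompact (A j) := fun j => (hA_closed j).isCompact
    have hA_meas : ∀ j, MeasurableSet (A j) := fun j => (hA_closed j).measurableSet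
    set m : ℕ → ℝ := fun j => (μ (A j)).toReal with hm
    have hm_nonneg : ∀ j, 0 ≤ m j := fun j => ENNReal.toReal_nonneg
    have hm_le_one : ∀ j, m j ≤ 1 := fun j => by
      rw [hm]
      have h1 : μ (A j) ≤ 1 := prob_le_one
      have := ENNReal.toReal_mono ENNReal.one_ne_top h1
      simpa using this
    have hm_mono : ∀ j, m (j + 1) ≤ m j := fun j => by
      apply ENNReal.toReal_mono (measure_ne_top μ _)
      apply measure_mono
      intro y hy
      simp only [hA, Set.mem_setOf_eq] at hy ⊢
      push_cast at hy ⊢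
      linarith
    -- lower bound : m (k+1) ≤ Λ (g k)
    have hlow : ∀ k, m (k + 1) ≤ Λ (g k) := by
      intro k
      have htest : g k ∈ tests (A (k + 1)) := by
        constructor
        · exact fun y => hg_nonneg k y
        · intro y hy
          simp only [hA, Set.mem_setOf_eq] at hy
          push_cast at hy
          refine le_min le_rfl ?_
          refine le_trans ?_ (le_max_right 0 _)
          linarith
      have := measure_le_test Λ hpos (K := ⟨A (k + 1), hA_compact _⟩) htest
      have h2 := ENNReal.toReal_mono ENNReal.ofReal_ne_top this
      rw [ENNReal.toReal_ofReal (hpos _ (hg_nonneg k))] at h2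
      exact h2
    -- upper bound : Λ (g k) ≤ (μ (U k)).toReal with U k ⊆ A (k-1)-ish
    set U : ℕ → Set M := fun k => {y | (k : ℝ) - 2⁻¹ < (n : ℝ) * f y} with hU
    have hU_open : ∀ k, IsOpen (U k) := fun k =>
      isOpen_lt continuous_const (continuous_const.mul f.continuous)
    have hup : ∀ k, Λ (g k) ≤ (μ (U k)).toReal := by
      intro k
      have h1 : ENNReal.ofReal (Λ (g k)) ≤ (rCont Λ ⟨A k, hA_compact k⟩ : ℝ≥0∞) := by
        have h2 : (Λ (g k)).toNNReal ≤ rCont Λ ⟨A k, hA_compact k⟩ := by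
          refine le_csInf (rCont_image_nonempty Λ _) ?_
          rintro r ⟨h, hh, rfl⟩
          refine Real.toNNReal_le_toNNReal (IsPosF.mono hpos fun y => ?_)
          by_cases hy : y ∈ A k
          · exact (hg_le_one k y).trans (hh.2 y hy)
          · simp only [hA, Set.mem_setOf_eq, not_le] at hy
            have : g k y = 0 := by
              rw [hg_apply, max_eq_left (by linarith), min_eq_right zero_le_one]
            rw [this]
            exact hh.1 y
        simpa [ENNReal.ofReal] using ENNReal.coe_le_coe.2 h2
      have h3 : (rCont Λ ⟨A k, hA_compact k⟩ : ℝ≥0∞) ≤ μ (U k) := by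
        refine content_le_measure_open Λ hpos (hU_open k) _ fun y hy => ?_
        have hy' : (k : ℝ) ≤ (n : ℝ) * f y := hy
        simp only [hU, Set.mem_setOf_eq]
        linarith
      have h4 := ENNReal.toReal_mono (measure_ne_top μ _) (h1.trans h3)
      rwa [ENNReal.toReal_ofReal (hpos _ (hg_nonneg k))] at h4
    have hUsub : ∀ k, μ (U (k + 1)) ≤ μ (A k) := fun k => by
      apply measure_mono
      intro y hy
      simp only [hU, Set.mem_setOf_eq] at hy
      simp only [hA, Set.mem_setOf_eq]
      push_cast at hy
      linarith
    have hup' : ∀ k, Λ (g (k + 1)) ≤ m k := fun k =>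
      (hup (k + 1)).trans (ENNReal.toReal_mono (measure_ne_top μ _) (hUsub k))
    have hup0 : Λ (g 0) ≤ 1 := by
      refine (hup 0).trans ?_
      have : μ (U 0) ≤ 1 := prob_le_one
      have := ENNReal.toReal_mono ENNReal.one_ne_top this
      simpa using this
    -- set S := sum of m (k+1)
    set S : ℝ := ∑ k ∈ Finset.range n, m (k + 1) with hS
    have hlowS : S ≤ (n : ℝ) * Λ f := by
      rw [← hsumg]
      exact Finset.sum_le_sum fun k _ => hlow k
    have hupS : (n : ℝ) * Λ f ≤ 2 + S := by
      obtain ⟨p, rfl⟩ : ∃ p, n = p + 1 := ⟨n - 1, by omega⟩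
      rw [← hsumg, Finset.sum_range_succ']
      have h1 : ∑ k ∈ Finset.range p, Λ (g (k + 1)) ≤ ∑ k ∈ Finset.range p, m k :=
        Finset.sum_le_sum fun k _ => hup' k
      have h2 : ∑ k ∈ Finset.range p, m k
          = ∑ k ∈ Finset.range p, m (k + 1) + (m 0 - m p) := by
        have := Finset.sum_range_sub' m p
        have hsplit : ∑ k ∈ Finset.range p, (m k - m (k + 1)) = m 0 - m p := this
        have : ∑ k ∈ Finset.range p, m k - ∑ k ∈ Finset.range p, m (k + 1)
            = m 0 - m p := by rw [← Finset.sum_sub_distrib]; exact hsplit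
        linarith
      have h3 : ∑ k ∈ Finset.range p, m (k + 1) ≤ S := by
        rw [hS]
        refine Finset.sum_le_sum_of_subset_of_nonneg ?_ fun k _ _ => hm_nonneg _
        exact Finset.range_subset_range.2 (Nat.le_succ p)
      have h4 : m 0 - m p ≤ 1 := by
        have := hm_nonneg p
        have := hm_le_one 0
        linarith
      linarith
    -- S vs the integral
    have hint : (n : ℝ) * (∫ y, f y ∂μ) - 1 ≤ S ∧ S ≤ (n : ℝ) * (∫ y, f y ∂μ) := by
      have hS_int : S = ∫ y, (∑ k ∈ Finset.range n,
          (A (k + 1)).indicator (fun _ => (1:ℝ)) y) ∂μ := by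
        rw [integral_finset_sum _ fun k _ =>
          (integrable_const (1:ℝ)).indicator (hA_meas (k + 1))]
        rw [hS]
        congr 1
        ext k
        rw [integral_indicator_const _ (hA_meas (k + 1)), smul_eq_mul, mul_one]
        rfl
      have hptwise : ∀ y, (n : ℝ) * f y - 1 ≤ (∑ k ∈ Finset.range n,
            (A (k + 1)).indicator (fun _ => (1:ℝ)) y)
          ∧ (∑ k ∈ Finset.range n, (A (k + 1)).indicator (fun _ => (1:ℝ)) y)
            ≤ (n : ℝ) * f y := by
        intro y
        have heq : ∑ k ∈ Finset.range n, (A (k + 1)).indicator (fun _ => (1:ℝ)) y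
            = ∑ k ∈ Finset.range n, (if ((k : ℝ) + 1) ≤ (n : ℝ) * f y then (1:ℝ) else 0) := by
          refine Finset.sum_congr rfl fun k _ => ?_
          rw [Set.indicator_apply]
          congr 1
          simp only [hA, Set.mem_setOf_eq]
          push_cast
          rfl
        rw [heq]
        exact ⟨le_sum_indicator n _ (htf y).2, sum_indicator_le n _ (htf y).1⟩
      have hint_sum : Integrable (fun y => ∑ k ∈ Finset.range n,
          (A (k + 1)).indicator (fun _ => (1:ℝ)) y) μ :=
        integrable_finset_sum _ fun k _ =>
          (integrable_const (1:ℝ)).indicator (hA_meas (k + 1))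
      have hint_f : Integrable (fun y => (n : ℝ) * f y - 1) μ :=
        ((cm_integrable μ f).const_mul _).sub (integrable_const 1)
      have hint_f2 : Integrable (fun y => (n : ℝ) * f y) μ :=
        (cm_integrable μ f).const_mul _
      constructor
      · rw [hS_int]
        have := integral_mono hint_f hint_sum fun y => (hptwise y).1
        calc (n : ℝ) * (∫ y, f y ∂μ) - 1
            = ∫ y, ((n : ℝ) * f y - 1) ∂μ := by
              rw [integral_sub hint_f2 (integrable_const 1), integral_const]
              have hmul : ∫ y, (n : ℝ) * f y ∂μ = (n : ℝ) * ∫ y, f y ∂μ := by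
                simpa [smul_eq_mul] using integral_smul ((n : ℝ)) (fun y => f y) (μ := μ)
              simp [hmul]
          _ ≤ _ := this
      · rw [hS_int]
        have := integral_mono hint_sum hint_f2 fun y => (hptwise y).2
        calc ∫ y, (∑ k ∈ Finset.range n, (A (k + 1)).indicator (fun _ => (1:ℝ)) y) ∂μ
            ≤ ∫ y, (n : ℝ) * f y ∂μ := this
          _ = (n : ℝ) * ∫ y, f y ∂μ := by
              simpa [smul_eq_mul] using integral_smul ((n : ℝ)) (fun y => f y) (μ := μ)
      -- end
    rw [abs_le]
    constructor
    · rw [neg_le, neg_sub, le_div_iff₀ hnpos]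
      nlinarith [hint.1, hlowS]
    · rw [le_div_iff₀ hnpos]
      nlinarith [hint.2, hupS]
  -- conclude Λ f = ∫ f
  have hzero : Λ f - ∫ y, f y ∂μ = 0 := by
    by_contra hd
    have habs : 0 < |Λ f - ∫ y, f y ∂μ| := abs_pos.2 (sub_ne_zero.2 ?_)
    · obtain ⟨n, hn⟩ := exists_nat_gt (3 / |Λ f - ∫ y, f y ∂μ|)
      have hn1 : 1 ≤ n := by
        by_contra h
        push_neg at h
        interval_cases n
        simp only [Nat.cast_zero] at hn
        have : 0 < 3 / |Λ f - ∫ y, f y ∂μ| := by positivity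
        linarith
      have := key n hn1
      have hnpos : (0:ℝ) < n := by exact_mod_cast hn1
      rw [div_lt_iff₀ habs] at hn
      have : 3 / (n:ℝ) < |Λ f - ∫ y, f y ∂μ| := by
        rw [div_lt_iff₀ hnpos]
        linarith [mul_comm (|Λ f - ∫ y, f y ∂μ|) (n:ℝ)]
      linarith
    · intro h; exact hd (by rw [h]; ring)
  linarith [hzero]

theorem integral_rieszMeasure (hpos : IsPosF Λ) (hone : Λ 1 = 1) (f : C(M, ℝ)) :
    ∫ y, f y ∂(rieszMeasure Λ hpos) = Λ f := by
  set μ := rieszMeasure Λ hpos with hμ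
  haveI : IsProbabilityMeasure μ := rieszMeasure_prob Λ hpos hone
  set c : ℝ := ‖f‖ + 1 with hc
  have hcpos : (0:ℝ) < c := by positivity
  set g : C(M, ℝ) := (2 * c)⁻¹ • (f + c • 1) with hgdef
  have hg_apply : ∀ y, g y = (2 * c)⁻¹ * (f y + c) := fun y => by
    simp [hgdef, mul_comm]
    ring
  have hbound : ∀ y, |f y| ≤ ‖f‖ := fun y => by
    have := f.norm_coe_le_norm y
    simpa using this
  have hg0 : ∀ y, 0 ≤ g y := fun y => by
    rw [hg_apply]
    have := (abs_le.1 (hbound y)).1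
    have h1 : 0 ≤ f y + c := by rw [hc]; linarith
    positivity
  have hg1 : ∀ y, g y ≤ 1 := fun y => by
    rw [hg_apply]
    have := (abs_le.1 (hbound y)).2
    rw [inv_mul_le_iff₀ (by positivity), mul_one, hc]
    linarith
  have haux := integral_riesz_aux Λ hpos hone g hg0 hg1
  have hΛg : Λ g = (2 * c)⁻¹ * (Λ f + c) := by
    rw [hgdef]
    rw [_root_.map_smul, map_add, _root_.map_smul, hone]
    simp only [smul_eq_mul, mul_one]
  have hIg : ∫ y, g y ∂μ = (2 * c)⁻¹ * ((∫ y, f y ∂μ) + c) := by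
    have : ∫ y, g y ∂μ = ∫ y, (2 * c)⁻¹ * (f y + c) ∂μ := by
      congr 1; ext y; exact hg_apply y
    have hmul : ∫ y, (2 * c)⁻¹ * (f y + c) ∂μ = (2 * c)⁻¹ * ∫ y, (f y + c) ∂μ := by
      simpa [smul_eq_mul] using integral_smul ((2 * c)⁻¹) (fun y => f y + c) (μ := μ)
    rw [this, hmul, integral_add (cm_integrable μ f) (integrable_const c), integral_const]
    simp
  rw [hIg, hΛg] at haux
  have h2c : ((2 * c)⁻¹ : ℝ) ≠ 0 := by positivity
  have := mul_left_cancel₀ h2c haux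
  linarith

end AttractingCenter

namespace AttractingCenter

variable {M : Type*} [MetricSpace M] [CompactSpace M] [MeasurableSpace M] [BorelSpace M]

/-- Two Borel probability measures with the same integrals of continuous functions agree. -/
lemma measure_ext_integral {μ ν : Measure M} [IsProbabilityMeasure μ] [IsProbabilityMeasure ν]
    (h : ∀ f : C(M, ℝ), ∫ y, f y ∂μ = ∫ y, f y ∂ν) : μ = ν := by
  apply ext_of_forall_lintegral_eq_of_IsFiniteMeasure
  intro f
  set fc : C(M, ℝ) := ⟨fun y => ((f y : ℝ≥0) : ℝ), NNReal.continuous_coe.comp f.continuous⟩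
    with hfc
  have h1 : ∫⁻ x, (f x : ℝ≥0∞) ∂μ = ENNReal.ofReal (∫ x, ((f x : ℝ≥0) : ℝ) ∂μ) :=
    lintegral_coe_eq_integral _ (cm_integrable μ fc)
  have h2 : ∫⁻ x, (f x : ℝ≥0∞) ∂ν = ENNReal.ofReal (∫ x, ((f x : ℝ≥0) : ℝ) ∂ν) :=
    lintegral_coe_eq_integral _ (cm_integrable ν fc)
  rw [h1, h2]
  congr 1
  exact h fc

/-- The complement of the support of a measure is null (second countable space). -/
lemma measure_compl_measureSupport (μ : Measure M) :
    μ (measureSupport μ)ᶜ = 0 := by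
  set S : Set (Set M) := {U | IsOpen U ∧ μ U = 0} with hS
  have hsub : (measureSupport μ)ᶜ ⊆ ⋃₀ S := by
    intro x hx
    simp only [measureSupport, Set.mem_compl_iff, Set.mem_setOf_eq, not_forall] at hx
    obtain ⟨U, hU, hxU, hμU⟩ := hx
    push_neg at hμU
    exact ⟨U, ⟨hU, le_antisymm hμU (zero_le)⟩, hxU⟩
  obtain ⟨T, hTc, hTsub, hTeq⟩ := isOpen_sUnion_countable S fun U hU => hU.1
  have : μ (⋃₀ S) = 0 := by
    rw [← hTeq]
    exact (measure_sUnion_null_iff hTc).2 fun s hs => (hTsub hs).2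
  exact le_antisymm (le_trans (measure_mono hsub) this.le) (zero_le)

variable (φ : ℝ → M → M) (hcont : Continuous fun q : M × ℝ => φ q.2 q.1)

/-- The time-`r` map of the flow as a continuous map. -/
def flowCM (r : ℝ) : C(M, M) :=
  ⟨φ r, hcont.comp (continuous_id.prodMk continuous_const)⟩

/-- The set of normalized positive invariant functionals, inside the weak dual. -/
def invSet : Set (WeakDual ℝ C(M, ℝ)) :=
  {Λ | Λ 1 = 1 ∧ (∀ f : C(M, ℝ), (∀ y, 0 ≤ f y) → 0 ≤ Λ f) ∧
    (∀ r : ℝ, ∀ f : C(M, ℝ), Λ (f.comp (flowCM φ hcont r)) = Λ f)}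

lemma isClosed_invSet : IsClosed (invSet φ hcont) := by
  have h1 : IsClosed {Λ : WeakDual ℝ C(M, ℝ) | Λ 1 = 1} :=
    isClosed_eq (WeakDual.eval_continuous 1) continuous_const
  have h2 : IsClosed {Λ : WeakDual ℝ C(M, ℝ) | ∀ f : C(M, ℝ), (∀ y, 0 ≤ f y) → 0 ≤ Λ f} := by
    have : {Λ : WeakDual ℝ C(M, ℝ) | ∀ f : C(M, ℝ), (∀ y, 0 ≤ f y) → 0 ≤ Λ f}
        = ⋂ f ∈ {f : C(M, ℝ) | ∀ y, 0 ≤ f y}, {Λ : WeakDual ℝ C(M, ℝ) | 0 ≤ Λ f} := by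
      ext Λ; simp only [Set.mem_setOf_eq, Set.mem_iInter₂]
    rw [this]
    exact isClosed_biInter fun f _ =>
      isClosed_le continuous_const (WeakDual.eval_continuous f)
  have h3 : IsClosed {Λ : WeakDual ℝ C(M, ℝ) |
      ∀ r : ℝ, ∀ f : C(M, ℝ), Λ (f.comp (flowCM φ hcont r)) = Λ f} := by
    have : {Λ : WeakDual ℝ C(M, ℝ) |
        ∀ r : ℝ, ∀ f : C(M, ℝ), Λ (f.comp (flowCM φ hcont r)) = Λ f}
        = ⋂ r : ℝ, ⋂ f : C(M, ℝ),
          {Λ : WeakDual ℝ C(M, ℝ) | Λ (f.comp (flowCM φ hcont r)) = Λ f} := by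
      ext Λ; simp only [Set.mem_setOf_eq, Set.mem_iInter]
    rw [this]
    exact isClosed_iInter fun r => isClosed_iInter fun f =>
      isClosed_eq (WeakDual.eval_continuous _) (WeakDual.eval_continuous f)
  have : invSet φ hcont = {Λ : WeakDual ℝ C(M, ℝ) | Λ 1 = 1}
      ∩ ({Λ | ∀ f : C(M, ℝ), (∀ y, 0 ≤ f y) → 0 ≤ Λ f}
      ∩ {Λ | ∀ r : ℝ, ∀ f : C(M, ℝ), Λ (f.comp (flowCM φ hcont r)) = Λ f}) := by
    ext Λ
    simp only [invSet, Set.mem_setOf_eq, Set.mem_inter_iff]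
  rw [this]
  exact h1.inter (h2.inter h3)

lemma abs_le_of_mem_invSet {Λ : WeakDual ℝ C(M, ℝ)} (hΛ : Λ ∈ invSet φ hcont)
    (f : C(M, ℝ)) : |Λ f| ≤ ‖f‖ := by
  obtain ⟨hone, hpos, -⟩ := hΛ
  have hb : ∀ y : M, |f y| ≤ ‖f‖ := fun y => by
    have := f.norm_coe_le_norm y
    simpa using this
  have hu : 0 ≤ Λ (‖f‖ • (1 : C(M, ℝ)) - f) := by
    apply hpos
    intro y
    simp only [ContinuousMap.sub_apply, ContinuousMap.smul_apply, ContinuousMap.one_apply,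
      smul_eq_mul, mul_one]
    linarith [(abs_le.1 (hb y)).2]
  have hl : 0 ≤ Λ (‖f‖ • (1 : C(M, ℝ)) + f) := by
    apply hpos
    intro y
    simp only [ContinuousMap.add_apply, ContinuousMap.smul_apply, ContinuousMap.one_apply,
      smul_eq_mul, mul_one]
    linarith [(abs_le.1 (hb y)).1]
  rw [map_sub, _root_.map_smul, hone] at hu
  rw [map_add, _root_.map_smul, hone] at hl
  simp only [smul_eq_mul, mul_one] at hu hl
  rw [abs_le]
  constructor <;> linarith

lemma isCompact_invSet : IsCompact (invSet φ hcont) := by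
  refine IsCompact.of_isClosed_subset (WeakDual.isCompact_closedBall (𝕜 := ℝ) 0 1)
    (isClosed_invSet φ hcont) ?_
  intro Λ hΛ
  simp only [Set.mem_preimage, Metric.mem_closedBall, dist_zero_right]
  refine ContinuousLinearMap.opNorm_le_bound _ zero_le_one fun f => ?_
  rw [one_mul]
  exact (abs_le_of_mem_invSet φ hcont hΛ f).trans le_rfl

lemma weakDual_apply (Λ' Λ'' : WeakDual ℝ C(M, ℝ)) (c d : ℝ) (f : C(M, ℝ)) :
    (c • Λ' + d • Λ'') f = c * Λ' f + d * Λ'' f := rfl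

lemma convex_invSet : Convex ℝ (invSet φ hcont) := by
  intro Λ₁ h₁ Λ₂ h₂ a b ha hb hab
  refine ⟨?_, ?_, ?_⟩
  · show (a • Λ₁ + b • Λ₂) 1 = 1
    rw [weakDual_apply, h₁.1, h₂.1]; linarith
  · intro f hf
    show 0 ≤ (a • Λ₁ + b • Λ₂) f
    rw [weakDual_apply]
    have := h₁.2.1 f hf
    have := h₂.2.1 f hf
    positivity
  · intro r f
    show (a • Λ₁ + b • Λ₂) (f.comp (flowCM φ hcont r)) = (a • Λ₁ + b • Λ₂) f
    rw [weakDual_apply, weakDual_apply, h₁.2.2 r f, h₂.2.2 r f]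

end AttractingCenter

namespace AttractingCenter

variable {M : Type*} [MetricSpace M] [CompactSpace M] [MeasurableSpace M] [BorelSpace M]

/-- The functional of integration against a probability measure, as a weak dual element. -/
noncomputable def intFunctional (ν : Measure M) [IsProbabilityMeasure ν] :
    WeakDual ℝ C(M, ℝ) :=
  LinearMap.mkContinuous
    { toFun := fun f : C(M, ℝ) => ∫ y, f y ∂ν
      map_add' := fun f g => by
        have := integral_add (cm_integrable ν f) (cm_integrable ν g)
        simpa using this
      map_smul' := fun c f => by
        have := integral_smul c (fun y => f y) (μ := ν)
        simpa [smul_eq_mul] using this }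
    1 (fun f => by
      have hb : ∀ᵐ y ∂ν, ‖f y‖ ≤ ‖f‖ := ae_of_all _ fun y => by
        have := f.norm_coe_le_norm y; simpa using this
      have := norm_integral_le_of_norm_le (integrable_const ‖f‖) hb
      simpa using this)

lemma intFunctional_apply (ν : Measure M) [IsProbabilityMeasure ν] (f : C(M, ℝ)) :
    intFunctional ν f = ∫ y, f y ∂ν := rfl

variable (φ : ℝ → M → M) (hcont : Continuous fun q : M × ℝ => φ q.2 q.1)

theorem exists_ergodic_of_extreme {Λ : WeakDual ℝ C(M, ℝ)}
    (hΛ : Λ ∈ Set.extremePoints ℝ (invSet φ hcont)) :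
    ∃ μ : Measure M, IsProbabilityMeasure μ ∧ (∀ t : ℝ, MeasurePreserving (φ t) μ μ) ∧
      (∀ B : Set M, MeasurableSet B → (∀ t : ℝ, φ t ⁻¹' B = B) → μ B = 0 ∨ μ B = 1) ∧
      ∀ f : C(M, ℝ), ∫ y, f y ∂μ = Λ f := by
  have hmem : Λ ∈ invSet φ hcont := hΛ.1
  have hpos : IsPosF (Λ : C(M, ℝ) →L[ℝ] ℝ) := hmem.2.1
  set μ : Measure M := rieszMeasure _ hpos with hμdef
  haveI hprob : IsProbabilityMeasure μ := rieszMeasure_prob _ hpos hmem.1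
  have hrep : ∀ f : C(M, ℝ), ∫ y, f y ∂μ = Λ f := fun f =>
    integral_rieszMeasure _ hpos hmem.1 f
  have hφm : ∀ t : ℝ, Measurable (φ t) := fun t => (flowCM φ hcont t).continuous.measurable
  -- invariance
  have hpres : ∀ t : ℝ, MeasurePreserving (φ t) μ μ := by
    intro t
    refine ⟨hφm t, ?_⟩
    haveI : IsProbabilityMeasure (Measure.map (φ t) μ) :=
      Measure.isProbabilityMeasure_map (hφm t).aemeasurable
    apply measure_ext_integral
    intro f
    rw [integral_map (hφm t).aemeasurable f.continuous.aestronglyMeasurable]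
    have h1 : ∫ x, f (φ t x) ∂μ = ∫ x, (f.comp (flowCM φ hcont t)) x ∂μ := rfl
    rw [h1, hrep _, hrep f, hmem.2.2 t f]
  refine ⟨μ, hprob, hpres, ?_, hrep⟩
  -- ergodicity
  intro B hB hinv
  by_contra hcon
  push_neg at hcon
  obtain ⟨hB0, hB1⟩ := hcon
  have hBfin : μ B ≠ ∞ := measure_ne_top μ B
  have hBcfin : μ Bᶜ ≠ ∞ := measure_ne_top μ Bᶜ
  have hBc0 : μ Bᶜ ≠ 0 := by
    intro hzero
    have hcompl : μ Bᶜ = 1 - μ B := prob_compl_eq_one_sub hB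
    rw [hzero] at hcompl
    have : (1 : ℝ≥0∞) ≤ μ B := tsub_eq_zero_iff_le.1 hcompl.symm
    exact hB1 (le_antisymm prob_le_one this)
  set ν₁ : Measure M := (μ B)⁻¹ • μ.restrict B with hν₁def
  set ν₂ : Measure M := (μ Bᶜ)⁻¹ • μ.restrict Bᶜ with hν₂def
  haveI hν₁prob : IsProbabilityMeasure ν₁ := by
    constructor
    rw [hν₁def, Measure.smul_apply, smul_eq_mul, Measure.restrict_apply MeasurableSet.univ,
      Set.univ_inter]
    exact ENNReal.inv_mul_cancel hB0 hBfin
  haveI hν₂prob : IsProbabilityMeasure ν₂ := by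
    constructor
    rw [hν₂def, Measure.smul_apply, smul_eq_mul, Measure.restrict_apply MeasurableSet.univ,
      Set.univ_inter]
    exact ENNReal.inv_mul_cancel hBc0 hBcfin
  -- invariance of the restricted measures
  have hmapB : ∀ (r : ℝ) (S : Set M), MeasurableSet S → (hS : MeasurableSet S) →
      True := fun _ _ _ _ => trivial
  have hrestr_inv : ∀ (C : Set M), MeasurableSet C → (∀ t : ℝ, φ t ⁻¹' C = C) →
      ∀ r : ℝ, Measure.map (φ r) (μ.restrict C) = μ.restrict C := by
    intro C hC hCinv r
    ext S hS
    rw [Measure.map_apply (hφm r) hS, Measure.restrict_apply hS,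
      Measure.restrict_apply ((hφm r) hS)]
    have h1 : φ r ⁻¹' S ∩ C = φ r ⁻¹' (S ∩ C) := by
      rw [Set.preimage_inter, hCinv r]
    rw [h1, (hpres r).measure_preimage (hS.inter hC).nullMeasurableSet]
  have hBcinv : ∀ t : ℝ, φ t ⁻¹' Bᶜ = Bᶜ := fun t => by
    rw [Set.preimage_compl, hinv t]
  -- the two functionals belong to invSet
  have hmem₁ : intFunctional ν₁ ∈ invSet φ hcont := by
    refine ⟨?_, ?_, ?_⟩
    · rw [intFunctional_apply]
      simp
    · intro f hf
      rw [intFunctional_apply]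
      exact integral_nonneg fun y => hf y
    · intro r f
      rw [intFunctional_apply, intFunctional_apply, hν₁def]
      rw [integral_smul_measure, integral_smul_measure]
      congr 1
      have hstep : ∫ y, f y ∂(μ.restrict B)
          = ∫ y, f y ∂(Measure.map (φ r) (μ.restrict B)) := by
        rw [hrestr_inv B hB hinv r]
      rw [hstep, integral_map (hφm r).aemeasurable f.continuous.aestronglyMeasurable]
      rfl
  have hmem₂ : intFunctional ν₂ ∈ invSet φ hcont := by
    refine ⟨?_, ?_, ?_⟩
    · rw [intFunctional_apply]
      simp
    · intro f hf
      rw [intFunctional_apply]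
      exact integral_nonneg fun y => hf y
    · intro r f
      rw [intFunctional_apply, intFunctional_apply, hν₂def]
      rw [integral_smul_measure, integral_smul_measure]
      congr 1
      have hstep : ∫ y, f y ∂(μ.restrict Bᶜ)
          = ∫ y, f y ∂(Measure.map (φ r) (μ.restrict Bᶜ)) := by
        rw [hrestr_inv Bᶜ hB.compl hBcinv r]
      rw [hstep, integral_map (hφm r).aemeasurable f.continuous.aestronglyMeasurable]
      rfl
  -- the convex decomposition
  set a : ℝ := (μ B).toReal with hadef
  set b : ℝ := (μ Bᶜ).toReal with hbdef
  have ha : 0 < a := ENNReal.toReal_pos hB0 hBfin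
  have hb : 0 < b := ENNReal.toReal_pos hBc0 hBcfin
  have hab : a + b = 1 := by
    rw [hadef, hbdef, ← ENNReal.toReal_add hBfin hBcfin, measure_add_measure_compl hB,
      measure_univ, ENNReal.toReal_one]
  have hsum : a • intFunctional ν₁ + b • intFunctional ν₂ = Λ := by
    refine DFunLike.ext _ _ fun f => ?_
    rw [weakDual_apply]
    rw [intFunctional_apply, intFunctional_apply, hν₁def, hν₂def,
      integral_smul_measure, integral_smul_measure]
    have h₁ : a * ((μ B)⁻¹.toReal • ∫ y, f y ∂(μ.restrict B)) = ∫ y, f y ∂(μ.restrict B) := by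
      rw [smul_eq_mul, ← mul_assoc, ENNReal.toReal_inv, hadef, mul_inv_cancel₀ ha.ne', one_mul]
    have h₂ : b * ((μ Bᶜ)⁻¹.toReal • ∫ y, f y ∂(μ.restrict Bᶜ))
        = ∫ y, f y ∂(μ.restrict Bᶜ) := by
      rw [smul_eq_mul, ← mul_assoc, ENNReal.toReal_inv, hbdef, mul_inv_cancel₀ hb.ne', one_mul]
    rw [h₁, h₂, ← hrep f]
    exact integral_add_compl hB (cm_integrable μ f)
  have hseg : Λ ∈ openSegment ℝ (intFunctional ν₁) (intFunctional ν₂) :=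
    ⟨a, b, ha, hb, hab, hsum⟩
  have hext := (mem_extremePoints.1 hΛ).2 _ hmem₁ _ hmem₂ hseg
  have hLL : intFunctional ν₁ = intFunctional ν₂ := hext.1.trans hext.2.symm
  have hνν : ν₁ = ν₂ := by
    apply measure_ext_integral
    intro f
    have := DFunLike.congr_fun hLL f
    rwa [intFunctional_apply, intFunctional_apply] at this
  have hν₁B : ν₁ B = 1 := by
    rw [hν₁def, Measure.smul_apply, smul_eq_mul, Measure.restrict_apply hB, Set.inter_self]
    exact ENNReal.inv_mul_cancel hB0 hBfin
  have hν₂B : ν₂ B = 0 := by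
    rw [hν₂def, Measure.smul_apply, smul_eq_mul, Measure.restrict_apply hB,
      Set.inter_compl_self, measure_empty, mul_zero]
  rw [hνν, hν₂B] at hν₁B
  exact one_ne_zero hν₁B.symm

end AttractingCenter

namespace AttractingCenter

variable {M : Type*} [MetricSpace M] [CompactSpace M] [MeasurableSpace M] [BorelSpace M]
variable (φ : ℝ → M → M) (hcont : Continuous fun q : M × ℝ => φ q.2 q.1)
include hcont

lemma orbit_continuous (x : M) : Continuous fun s : ℝ => φ s x :=
  hcont.comp (continuous_const.prodMk continuous_id)

lemma avg_bound (x : M) (t : ℝ) (f : C(M, ℝ)) :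
    ‖(1 / t) * ∫ s in (0:ℝ)..t, f (φ s x)‖ ≤ 1 * ‖f‖ := by
  rw [one_mul]
  rcases eq_or_ne t 0 with rfl | ht
  · simp
  · have hb : ∀ s ∈ Set.uIoc (0:ℝ) t, ‖f (φ s x)‖ ≤ ‖f‖ := fun s _ => by
      have := f.norm_coe_le_norm (φ s x); simpa using this
    have hni := intervalIntegral.norm_integral_le_of_norm_le_const hb
    have habs : ‖(1 / t) * ∫ s in (0:ℝ)..t, f (φ s x)‖
        = |t|⁻¹ * ‖∫ s in (0:ℝ)..t, f (φ s x)‖ := by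
      rw [norm_mul]
      congr 1
      simp [abs_inv]
    rw [habs]
    calc |t|⁻¹ * ‖∫ s in (0:ℝ)..t, f (φ s x)‖ ≤ |t|⁻¹ * (‖f‖ * |t - 0|) := by
          apply mul_le_mul_of_nonneg_left _ (inv_nonneg.2 (abs_nonneg t))
          exact hni
      _ = ‖f‖ := by
          rw [sub_zero]
          field_simp [abs_ne_zero.2 ht]

/-- The time-average functional along a piece of orbit. -/
noncomputable def avgF (x : M) (t : ℝ) : WeakDual ℝ C(M, ℝ) :=
  LinearMap.mkContinuous
    { toFun := fun f : C(M, ℝ) => (1 / t) * ∫ s in (0:ℝ)..t, f (φ s x)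
      map_add' := fun f g => by
        have h1 : IntervalIntegrable (fun s => f (φ s x)) volume 0 t :=
          (f.continuous.comp (orbit_continuous φ hcont x)).intervalIntegrable _ _
        have h2 : IntervalIntegrable (fun s => g (φ s x)) volume 0 t :=
          (g.continuous.comp (orbit_continuous φ hcont x)).intervalIntegrable _ _
        have := intervalIntegral.integral_add h1 h2
        simp only [ContinuousMap.add_apply]
        rw [this]
        ring
      map_smul' := fun c f => by
        have := intervalIntegral.integral_smul c (fun s => f (φ s x)) (a := (0:ℝ)) (b := t)
          (μ := volume)
        simp only [ContinuousMap.smul_apply]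
        rw [this]
        simp only [smul_eq_mul, RingHom.id_apply]
        ring }
    1 (fun f => avg_bound φ hcont x t f)

lemma avgF_apply (x : M) (t : ℝ) (f : C(M, ℝ)) :
    avgF φ hcont x t f = (1 / t) * ∫ s in (0:ℝ)..t, f (φ s x) := rfl

lemma avgF_mem_ball (x : M) (t : ℝ) :
    avgF φ hcont x t ∈ ⇑WeakDual.toStrongDual ⁻¹' Metric.closedBall 0 1 := by
  simp only [Set.mem_preimage, Metric.mem_closedBall, dist_zero_right]
  refine ContinuousLinearMap.opNorm_le_bound _ zero_le_one fun f => ?_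
  simpa [WeakDual.toStrongDual_apply, avgF_apply] using avg_bound φ hcont x t f

omit hcont in
/-- Cluster point evaluation: a closed constraint satisfied eventually passes to
the cluster point. -/
lemma cluster_eval_mem {L : Filter (WeakDual ℝ C(M, ℝ))} [L.NeBot]
    {Λ : WeakDual ℝ C(M, ℝ)} (hΛ : ClusterPt Λ L) {G : WeakDual ℝ C(M, ℝ) → ℝ}
    (hG : Continuous G) {S : Set ℝ} (hSc : IsClosed S) (hS : ∀ᶠ Λ' in L, G Λ' ∈ S) :
    G Λ ∈ S := by
  have h1 : ClusterPt (G Λ) (Filter.map G L) :=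
    hΛ.map hG.continuousAt Filter.tendsto_map
  have h2 : Filter.map G L ≤ Filter.principal S :=
    Filter.le_principal_iff.2 (Filter.mem_map.2 hS)
  have h3 : ClusterPt (G Λ) (Filter.principal S) := h1.mono h2
  rw [← hSc.closure_eq]
  exact mem_closure_iff_clusterPt.2 h3

end AttractingCenter

namespace AttractingCenter

variable {M : Type*} [MetricSpace M] [CompactSpace M] [MeasurableSpace M] [BorelSpace M]
variable (φ : ℝ → M → M) (hcont : Continuous fun q : M × ℝ => φ q.2 q.1)
include hcont

theorem eventually_sojourn
    (hadd : ∀ s t : ℝ, ∀ x, φ t (φ s x) = φ (s + t) x) (x : M) {C : Set M}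
    (hC : ∀ μ : Measure M, IsProbabilityMeasure μ → (∀ t : ℝ, MeasurePreserving (φ t) μ μ) →
      (∀ B : Set M, MeasurableSet B → (∀ t : ℝ, φ t ⁻¹' B = B) → μ B = 0 ∨ μ B = 1) →
      measureSupport μ ⊆ C)
    {δ ε : ℝ} (hδ : 0 < δ) (hε : 0 < ε) :
    ∀ᶠ t in atTop, 1 - ε < (1 / t) *
      ∫ s in (0:ℝ)..t, (Metric.thickening δ C).indicator (fun _ => (1:ℝ)) (φ s x) := by
  set V : Set M := Metric.thickening δ C with hV
  set I : ℝ → ℝ := fun s => V.indicator (fun _ => (1:ℝ)) (φ s x) with hIdef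
  have hImeas : Measurable I := by
    have hIeq : I = Set.indicator ((fun s => φ s x) ⁻¹' V) (fun _ => (1:ℝ)) := by
      funext s
      show V.indicator (fun _ => (1:ℝ)) (φ s x)
          = ((fun s => φ s x) ⁻¹' V).indicator (fun _ => (1:ℝ)) s
      by_cases h : φ s x ∈ V
      · rw [Set.indicator_of_mem h,
          Set.indicator_of_mem (show s ∈ (fun s => φ s x) ⁻¹' V from h)]
      · rw [Set.indicator_of_notMem h,
          Set.indicator_of_notMem (show s ∉ (fun s => φ s x) ⁻¹' V from h)]
    rw [hIeq]
    exact measurable_const.indicator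
      ((Metric.isOpen_thickening.preimage (orbit_continuous φ hcont x)).measurableSet)
  have hI01 : ∀ s, 0 ≤ I s ∧ I s ≤ 1 := fun s => by
    show 0 ≤ V.indicator (fun _ => (1:ℝ)) (φ s x) ∧ V.indicator (fun _ => (1:ℝ)) (φ s x) ≤ 1
    by_cases h : φ s x ∈ V
    · rw [Set.indicator_of_mem h]; norm_num
    · rw [Set.indicator_of_notMem h]; norm_num
  have hIint : ∀ t : ℝ, IntervalIntegrable I volume 0 t := by
    intro t
    rw [intervalIntegrable_iff]
    haveI : IsFiniteMeasure (volume.restrict (Set.uIoc (0:ℝ) t)) := by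
      constructor
      rw [Measure.restrict_apply_univ]
      rw [Set.uIoc]
      simp [Real.volume_Ioc]
    exact ⟨hImeas.aestronglyMeasurable, HasFiniteIntegral.of_bounded (C := 1)
      (ae_of_all _ fun s => by
        rw [Real.norm_eq_abs, abs_le]
        constructor <;> linarith [(hI01 s).1, (hI01 s).2])⟩
  by_contra hfreq
  rw [Filter.not_eventually] at hfreq
  have hfreq' : ∃ᶠ t in atTop, (1 / t) * ∫ s in (0:ℝ)..t, I s ≤ 1 - ε := by
    refine hfreq.mono fun t ht => ?_
    push_neg at ht
    exact ht
  set F : Filter ℝ := atTop ⊓ 𝓟 {t : ℝ | (1 / t) * ∫ s in (0:ℝ)..t, I s ≤ 1 - ε} with hF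
  haveI hFneBot : F.NeBot := frequently_iff_neBot.1 hfreq'
  set u : ℝ → WeakDual ℝ C(M, ℝ) := avgF φ hcont x with hu
  have hmaple : Filter.map u F ≤
      𝓟 (⇑WeakDual.toStrongDual ⁻¹' Metric.closedBall 0 1) :=
    Filter.le_principal_iff.2 (Filter.mem_map.2
      (Filter.Eventually.of_forall fun t => avgF_mem_ball φ hcont x t))
  obtain ⟨Λ, hΛball, hclust⟩ := (WeakDual.isCompact_closedBall (𝕜 := ℝ) 0 1) hmaple
  have ht1 : ∀ᶠ t in F, (1:ℝ) ≤ t := (eventually_ge_atTop 1).filter_mono inf_le_left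
  have htA : ∀ᶠ t in F, (1 / t) * ∫ s in (0:ℝ)..t, I s ≤ 1 - ε := by
    have : {t : ℝ | (1 / t) * ∫ s in (0:ℝ)..t, I s ≤ 1 - ε} ∈ F :=
      mem_inf_of_right (mem_principal_self _)
    exact this
  -- the cluster functional is normalized
  have hone : Λ (1 : C(M, ℝ)) = 1 := by
    have := cluster_eval_mem hclust (WeakDual.eval_continuous (1 : C(M, ℝ)))
      isClosed_singleton (S := {(1:ℝ)}) ?_
    · simpa using this
    · rw [Filter.eventually_map]
      refine ht1.mono fun t ht => ?_
      have htne : t ≠ 0 := by linarith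
      simp only [hu, avgF_apply, ContinuousMap.one_apply]
      rw [intervalIntegral.integral_const]
      simp only [sub_zero, smul_eq_mul, mul_one, Set.mem_singleton_iff]
      field_simp
  -- positivity
  have hpos : ∀ f : C(M, ℝ), (∀ y, 0 ≤ f y) → 0 ≤ Λ f := by
    intro f hf
    have := cluster_eval_mem hclust (WeakDual.eval_continuous f)
      isClosed_Ici (S := Set.Ici (0:ℝ)) ?_
    · simpa using this
    · rw [Filter.eventually_map]
      refine ht1.mono fun t ht => ?_
      simp only [hu, avgF_apply, Set.mem_Ici]
      have h1 : (0:ℝ) ≤ 1 / t := by positivity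
      have h2 : 0 ≤ ∫ s in (0:ℝ)..t, f (φ s x) :=
        intervalIntegral.integral_nonneg (by linarith) fun s _ => hf (φ s x)
      positivity
  -- invariance
  have hinv : ∀ r : ℝ, ∀ f : C(M, ℝ), Λ (f.comp (flowCM φ hcont r)) = Λ f := by
    intro r f
    have hbound : ∀ η : ℝ, 0 < η → |Λ (f.comp (flowCM φ hcont r)) - Λ f| ≤ η := by
      intro η hη
      have hScl : IsClosed {z : ℝ | |z| ≤ η} := isClosed_Iic.preimage continuous_abs
      have hGc : Continuous fun Λ' : WeakDual ℝ C(M, ℝ) =>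
          Λ' (f.comp (flowCM φ hcont r)) - Λ' f :=
        (WeakDual.eval_continuous _).sub (WeakDual.eval_continuous f)
      refine cluster_eval_mem hclust hGc hScl ?_
      rw [Filter.eventually_map]
      set g0 : ℝ → ℝ := fun s => f (φ s x) with hg0
      have hg0c : Continuous g0 := f.continuous.comp (orbit_continuous φ hcont x)
      have hg0i : ∀ a b : ℝ, IntervalIntegrable g0 volume a b := fun a b =>
        hg0c.intervalIntegrable a b
      have hbig : ∀ᶠ t in atTop, max 1 (2 * ‖f‖ * |r| / η) ≤ t := eventually_ge_atTop _
      refine (hbig.filter_mono inf_le_left).mono fun t ht => ?_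
      have ht1' : (1:ℝ) ≤ t := le_trans (le_max_left _ _) ht
      have htpos : (0:ℝ) < t := by linarith
      have hcompeq : u t (f.comp (flowCM φ hcont r))
          = (1 / t) * ∫ s in (0:ℝ)..t, g0 (s + r) := by
        rw [hu, avgF_apply]
        congr 1
        refine intervalIntegral.integral_congr fun s _ => ?_
        show f (φ r (φ s x)) = f (φ (s + r) x)
        rw [hadd s r x]
      have hshift : ∫ s in (0:ℝ)..t, g0 (s + r) = ∫ s in r..(t + r), g0 s := by
        have := intervalIntegral.integral_comp_add_right (a := (0:ℝ)) (b := t) g0 r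
        simpa using this
      have he1 : ∫ s in r..(t + r), g0 s
          = (∫ s in r..t, g0 s) + ∫ s in t..(t + r), g0 s :=
        (intervalIntegral.integral_add_adjacent_intervals (hg0i r t) (hg0i t (t + r))).symm
      have he2 : ∫ s in (0:ℝ)..t, g0 s
          = (∫ s in (0:ℝ)..r, g0 s) + ∫ s in r..t, g0 s :=
        (intervalIntegral.integral_add_adjacent_intervals (hg0i 0 r) (hg0i r t)).symm
      have hDeq : u t (f.comp (flowCM φ hcont r)) - u t f
          = (1 / t) * ((∫ s in t..(t + r), g0 s) - ∫ s in (0:ℝ)..r, g0 s) := by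
        rw [hcompeq, hshift, he1]
        rw [hu, avgF_apply]
        have : ∫ s in (0:ℝ)..t, f (φ s x) = ∫ s in (0:ℝ)..t, g0 s := rfl
        rw [this, he2]
        ring
      have hb1 : ‖∫ s in t..(t + r), g0 s‖ ≤ ‖f‖ * |r| := by
        have : ∀ s ∈ Set.uIoc t (t + r), ‖g0 s‖ ≤ ‖f‖ := fun s _ => by
          have := f.norm_coe_le_norm (φ s x); simpa using this
        have := intervalIntegral.norm_integral_le_of_norm_le_const this
        simpa using this
      have hb2 : ‖∫ s in (0:ℝ)..r, g0 s‖ ≤ ‖f‖ * |r| := by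
        have : ∀ s ∈ Set.uIoc (0:ℝ) r, ‖g0 s‖ ≤ ‖f‖ := fun s _ => by
          have := f.norm_coe_le_norm (φ s x); simpa using this
        have := intervalIntegral.norm_integral_le_of_norm_le_const this
        simpa using this
      show |u t (f.comp (flowCM φ hcont r)) - u t f| ≤ η
      rw [hDeq, abs_mul]
      have habs : |(1:ℝ) / t| = 1 / t := abs_of_pos (by positivity)
      rw [habs]
      have htr : |(∫ s in t..(t + r), g0 s) - ∫ s in (0:ℝ)..r, g0 s|
          ≤ 2 * ‖f‖ * |r| := by
        have := abs_sub (∫ s in t..(t + r), g0 s) (∫ s in (0:ℝ)..r, g0 s)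
        calc |(∫ s in t..(t + r), g0 s) - ∫ s in (0:ℝ)..r, g0 s|
            ≤ |∫ s in t..(t + r), g0 s| + |∫ s in (0:ℝ)..r, g0 s| := abs_sub _ _
          _ ≤ ‖f‖ * |r| + ‖f‖ * |r| := by
              refine add_le_add ?_ ?_
              · simpa [Real.norm_eq_abs] using hb1
              · simpa [Real.norm_eq_abs] using hb2
          _ = 2 * ‖f‖ * |r| := by ring
      have hfinal : (1 / t) * |(∫ s in t..(t + r), g0 s) - ∫ s in (0:ℝ)..r, g0 s|
          ≤ (1 / t) * (2 * ‖f‖ * |r|) :=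
        mul_le_mul_of_nonneg_left htr (by positivity)
      refine hfinal.trans ?_
      have ht2 : 2 * ‖f‖ * |r| / η ≤ t := le_trans (le_max_right _ _) ht
      rw [div_le_iff₀ hη] at ht2
      rw [one_div, inv_mul_le_iff₀ htpos]
      nlinarith
    have h1 : |Λ (f.comp (flowCM φ hcont r)) - Λ f| = 0 := by
      by_contra hne
      have hpos' : 0 < |Λ (f.comp (flowCM φ hcont r)) - Λ f| :=
        lt_of_le_of_ne (abs_nonneg _) (Ne.symm hne)
      have := hbound (|Λ (f.comp (flowCM φ hcont r)) - Λ f| / 2) (by positivity)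
      linarith
    have := abs_eq_zero.1 h1
    linarith [sub_eq_zero.1 this]
  have hΛinv : Λ ∈ invSet φ hcont := ⟨hone, hpos, hinv⟩
  -- Krein-Milman setup
  haveI : LocallyConvexSpace ℝ (WeakDual ℝ C(M, ℝ)) := WeakBilin.locallyConvexSpace
  have hKne : (invSet φ hcont).Nonempty := ⟨Λ, hΛinv⟩
  -- C is nonempty
  have hCne : C.Nonempty := by
    obtain ⟨Λe, hΛe⟩ := (isCompact_invSet φ hcont).extremePoints_nonempty hKne
    obtain ⟨μe, hμe_prob, hμe_pres, hμe_erg, hμe_rep⟩ :=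
      exists_ergodic_of_extreme φ hcont hΛe
    have hsupp := hC μe hμe_prob hμe_pres hμe_erg
    rcases Set.eq_empty_or_nonempty (measureSupport μe) with hemp | ⟨y, hy⟩
    · exfalso
      have h1 : μe (measureSupport μe)ᶜ = 0 := measure_compl_measureSupport μe
      rw [hemp, Set.compl_empty] at h1
      have : (1 : ℝ≥0∞) = 0 := by rw [← measure_univ (μ := μe), h1]
      exact one_ne_zero this
    · exact ⟨y, hsupp hy⟩
  -- the Urysohn-type function
  set g : C(M, ℝ) := ⟨fun y => min 1 (max 0 ((2 / δ) * Metric.infDist y C - 1)),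
    continuous_const.min (continuous_const.max
      ((continuous_const.mul (Metric.continuous_infDist_pt C)).sub continuous_const))⟩
    with hgdef
  have hg_apply : ∀ y, g y = min 1 (max 0 ((2 / δ) * Metric.infDist y C - 1)) :=
    fun _ => rfl
  have hg0 : ∀ y, 0 ≤ g y := fun y => le_min zero_le_one (le_max_left _ _)
  have hgV : ∀ y, y ∉ V → g y = 1 := by
    intro y hy
    rw [hV] at hy
    have hd : δ ≤ Metric.infDist y C := by
      by_contra hlt
      push_neg at hlt
      exact hy ((Metric.mem_thickening_iff_infDist_lt hCne).2 hlt)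
    have harg : (1:ℝ) ≤ (2 / δ) * Metric.infDist y C - 1 := by
      have h2 : (2 / δ) * δ ≤ (2 / δ) * Metric.infDist y C :=
        mul_le_mul_of_nonneg_left hd (by positivity)
      rw [div_mul_cancel₀] at h2
      · linarith
      · exact hδ.ne'
    rw [hg_apply, max_eq_right (by linarith), min_eq_left harg]
  have hgW : ∀ y ∈ Metric.thickening (δ / 2) C, g y = 0 := by
    intro y hy
    have hd : Metric.infDist y C < δ / 2 :=
      (Metric.mem_thickening_iff_infDist_lt hCne).1 hy
    have hd0 : 0 ≤ Metric.infDist y C := Metric.infDist_nonneg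
    have harg : (2 / δ) * Metric.infDist y C - 1 < 0 := by
      have h2 : (2 / δ) * Metric.infDist y C < (2 / δ) * (δ / 2) :=
        mul_lt_mul_of_pos_left hd (by positivity)
      rw [div_mul_eq_mul_div, mul_div_assoc] at h2
      have : δ / 2 * (2 / δ) = 1 := by field_simp
      nlinarith [this]
    rw [hg_apply, max_eq_left harg.le, min_eq_right zero_le_one]
  -- the cluster functional gives g mass at least ε
  have hΛg : ε ≤ Λ g := by
    have := cluster_eval_mem hclust (WeakDual.eval_continuous g)
      isClosed_Ici (S := Set.Ici ε) ?_
    · simpa using this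
    · rw [Filter.eventually_map]
      filter_upwards [ht1, htA] with t ht htA'
      have htpos : (0:ℝ) < t := by linarith
      have hgi : IntervalIntegrable (fun s => g (φ s x)) volume 0 t :=
        (g.continuous.comp (orbit_continuous φ hcont x)).intervalIntegrable _ _
      have hptw : ∀ s ∈ Set.Icc (0:ℝ) t, 1 - I s ≤ g (φ s x) := by
        intro s _
        by_cases hmem : φ s x ∈ V
        · have : I s = 1 := by simp [hIdef, Set.indicator_of_mem hmem]
          rw [this]
          simpa using hg0 (φ s x)
        · have : I s = 0 := by simp [hIdef, Set.indicator_of_notMem hmem]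
          rw [this, hgV _ hmem]
          norm_num
      have hmono := intervalIntegral.integral_mono_on htpos.le
        (intervalIntegrable_const.sub (hIint t)) hgi hptw
      have hsubint : ∫ s in (0:ℝ)..t, ((1:ℝ) - I s)
          = t - ∫ s in (0:ℝ)..t, I s := by
        rw [intervalIntegral.integral_sub intervalIntegrable_const (hIint t),
          intervalIntegral.integral_const]
        simp
      rw [hsubint] at hmono
      show ε ≤ u t g
      rw [hu, avgF_apply]
      have hstep : (1 / t) * (t - ∫ s in (0:ℝ)..t, I s)
          ≤ (1 / t) * ∫ s in (0:ℝ)..t, g (φ s x) :=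
        mul_le_mul_of_nonneg_left hmono (by positivity)
      have hexp : (1 / t) * (t - ∫ s in (0:ℝ)..t, I s)
          = 1 - (1 / t) * ∫ s in (0:ℝ)..t, I s := by
        field_simp
      rw [hexp] at hstep
      linarith
  -- extreme points kill g
  have hKM := closure_convexHull_extremePoints (isCompact_invSet φ hcont)
    (convex_invSet φ hcont)
  set H : Set (WeakDual ℝ C(M, ℝ)) := {Λ' | Λ' g ≤ (0:ℝ)} with hHdef
  have hHclosed : IsClosed H :=
    isClosed_le (WeakDual.eval_continuous g) continuous_const
  have hHconvex : Convex ℝ H :=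
    convex_halfSpace_le ⟨fun a b => rfl, fun c a => rfl⟩ 0
  have hext_sub : Set.extremePoints ℝ (invSet φ hcont) ⊆ H := by
    intro Λ' hΛ'
    obtain ⟨μ', hμ'_prob, hμ'_pres, hμ'_erg, hμ'_rep⟩ :=
      exists_ergodic_of_extreme φ hcont hΛ'
    have hsupp' := hC μ' hμ'_prob hμ'_pres hμ'_erg
    have hgnull : μ' {y | g y ≠ 0} = 0 := by
      refine measure_mono_null ?_ (measure_compl_measureSupport μ')
      intro y hy
      simp only [Set.mem_setOf_eq] at hy
      intro hy'
      exact hy (hgW y (Metric.self_subset_thickening (half_pos hδ) C (hsupp' hy')))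
    have hint0 : ∫ y, g y ∂μ' = 0 := by
      apply integral_eq_zero_of_ae
      rw [Filter.EventuallyEq, ae_iff]
      convert hgnull using 2
      rfl
    show Λ' g ≤ 0
    rw [← hμ'_rep g, hint0]
  have hsub : invSet φ hcont ⊆ H := by
    rw [← hKM]
    exact closure_minimal (convexHull_min hext_sub hHconvex) hHclosed
  have : Λ g ≤ 0 := hsub hΛinv
  linarith

end AttractingCenter

/-- Zhou. For a flow `φ` on a compact metric space, the closure of the
union of the supports of all `φ`-invariant ergodic Borel probability measures is an
attracting center: the mean sojourn time of every orbit in every `δ`-neighbourhood of this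
set tends (in the liminf sense, as `δ → 0⁺`) to `1`. -/
theorem closure_union_supports_is_attracting_center
    {M : Type*} [MetricSpace M] [CompactSpace M] [MeasurableSpace M] [BorelSpace M]
    (φ : ℝ → M → M)
    (hcont : Continuous fun q : M × ℝ => φ q.2 q.1)
    (h0 : ∀ x, φ 0 x = x)
    (hadd : ∀ s t : ℝ, ∀ x, φ t (φ s x) = φ (s + t) x) :
    ∀ x : M,
      Filter.Tendsto
        (fun δ : ℝ => Filter.liminf
          (fun t : ℝ => (1 / t) *
            ∫ s in (0 : ℝ)..t,
              (Metric.thickening δ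
                (closure (⋃ μ ∈ {μ : Measure M | IsProbabilityMeasure μ ∧
                    (∀ t : ℝ, MeasurePreserving (φ t) μ μ) ∧
                    (∀ B : Set M, MeasurableSet B → (∀ t : ℝ, φ t ⁻¹' B = B) →
                      μ B = 0 ∨ μ B = 1)},
                  measureSupport μ))).indicator (fun _ => (1 : ℝ)) (φ s x))
          Filter.atTop)
        (nhdsWithin 0 (Set.Ioi 0)) (nhds 1) := by
  intro x
  set C : Set M := closure (⋃ μ ∈ {μ : Measure M | IsProbabilityMeasure μ ∧
      (∀ t : ℝ, MeasurePreserving (φ t) μ μ) ∧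
      (∀ B : Set M, MeasurableSet B → (∀ t : ℝ, φ t ⁻¹' B = B) →
        μ B = 0 ∨ μ B = 1)}, measureSupport μ) with hCdef
  have hC : ∀ μ : Measure M, IsProbabilityMeasure μ →
      (∀ t : ℝ, MeasurePreserving (φ t) μ μ) →
      (∀ B : Set M, MeasurableSet B → (∀ t : ℝ, φ t ⁻¹' B = B) → μ B = 0 ∨ μ B = 1) →
      measureSupport μ ⊆ C := by
    intro μ h1 h2 h3
    refine subset_trans ?_ subset_closure
    exact Set.subset_biUnion_of_mem (show μ ∈ _ from ⟨h1, h2, h3⟩)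
  have hkey : ∀ δ : ℝ, 0 < δ →
      Filter.liminf (fun t : ℝ => (1 / t) *
        ∫ s in (0 : ℝ)..t,
          (Metric.thickening δ C).indicator (fun _ => (1 : ℝ)) (φ s x)) Filter.atTop
      = 1 := by
    intro δ hδ
    set V : Set M := Metric.thickening δ C with hV
    set A : ℝ → ℝ := fun t => (1 / t) *
      ∫ s in (0 : ℝ)..t, V.indicator (fun _ => (1 : ℝ)) (φ s x) with hA
    set I : ℝ → ℝ := fun s => V.indicator (fun _ => (1:ℝ)) (φ s x) with hIdef
    have hImeas : Measurable I := by
      have hIeq : I = Set.indicator ((fun s => φ s x) ⁻¹' V) (fun _ => (1:ℝ)) := by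
        funext s
        show V.indicator (fun _ => (1:ℝ)) (φ s x)
            = ((fun s => φ s x) ⁻¹' V).indicator (fun _ => (1:ℝ)) s
        by_cases h : φ s x ∈ V
        · rw [Set.indicator_of_mem h,
            Set.indicator_of_mem (show s ∈ (fun s => φ s x) ⁻¹' V from h)]
        · rw [Set.indicator_of_notMem h,
            Set.indicator_of_notMem (show s ∉ (fun s => φ s x) ⁻¹' V from h)]
      rw [hIeq]
      exact measurable_const.indicator
        ((Metric.isOpen_thickening.preimage
          (AttractingCenter.orbit_continuous φ hcont x)).measurableSet)
    have hI01 : ∀ s, 0 ≤ I s ∧ I s ≤ 1 := fun s => by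
      show 0 ≤ V.indicator (fun _ => (1:ℝ)) (φ s x) ∧ V.indicator (fun _ => (1:ℝ)) (φ s x) ≤ 1
      by_cases h : φ s x ∈ V
      · rw [Set.indicator_of_mem h]; norm_num
      · rw [Set.indicator_of_notMem h]; norm_num
    have hIint : ∀ t : ℝ, IntervalIntegrable I volume 0 t := by
      intro t
      rw [intervalIntegrable_iff]
      haveI : IsFiniteMeasure (volume.restrict (Set.uIoc (0:ℝ) t)) := by
        constructor
        rw [Measure.restrict_apply_univ, Set.uIoc]
        simp [Real.volume_Ioc]
      exact ⟨hImeas.aestronglyMeasurable, HasFiniteIntegral.of_bounded (C := 1)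
        (ae_of_all _ fun s => by
          rw [Real.norm_eq_abs, abs_le]
          constructor <;> linarith [(hI01 s).1, (hI01 s).2])⟩
    have hub : ∀ᶠ t in atTop, A t ≤ 1 := by
      refine (eventually_ge_atTop (1:ℝ)).mono fun t ht => ?_
      have htpos : (0:ℝ) < t := by linarith
      have hint_le : ∫ s in (0:ℝ)..t, I s ≤ ∫ s in (0:ℝ)..t, (1:ℝ) :=
        intervalIntegral.integral_mono_on htpos.le (hIint t) intervalIntegrable_const
          fun s _ => (hI01 s).2
      rw [intervalIntegral.integral_const] at hint_le
      simp only [sub_zero, smul_eq_mul, mul_one] at hint_le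
      rw [hA]
      have h2 : (1 / t) * ∫ s in (0:ℝ)..t, I s ≤ (1 / t) * t :=
        mul_le_mul_of_nonneg_left hint_le (by positivity)
      have h3 : (1 / t) * t = 1 := by field_simp
      calc (1 / t) * ∫ s in (0:ℝ)..t, V.indicator (fun _ => (1:ℝ)) (φ s x)
          = (1 / t) * ∫ s in (0:ℝ)..t, I s := rfl
        _ ≤ (1 / t) * t := h2
        _ = 1 := h3
    have hlb0 : ∀ᶠ t in atTop, 0 ≤ A t := by
      refine (eventually_ge_atTop (1:ℝ)).mono fun t ht => ?_
      have htpos : (0:ℝ) < t := by linarith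
      have h2 : 0 ≤ ∫ s in (0:ℝ)..t, I s :=
        intervalIntegral.integral_nonneg htpos.le fun s _ => (hI01 s).1
      rw [hA]
      positivity
    have hbdd_le : Filter.IsBoundedUnder (· ≤ ·) Filter.atTop A :=
      ⟨1, by simpa [Filter.eventually_map] using hub⟩
    have hbdd_ge : Filter.IsBoundedUnder (· ≥ ·) Filter.atTop A :=
      ⟨0, by simpa [Filter.eventually_map] using hlb0⟩
    have h1 : Filter.liminf A Filter.atTop ≤ 1 :=
      Filter.liminf_le_of_frequently_le hub.frequently hbdd_ge
    have h2 : 1 ≤ Filter.liminf A Filter.atTop := by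
      by_contra hlt
      push_neg at hlt
      set L : ℝ := Filter.liminf A Filter.atTop with hL
      have hη : 0 < (1 - L) / 2 := by
        have : L < 1 := hlt
        linarith
      have hev := AttractingCenter.eventually_sojourn φ hcont hadd x hC hδ hη
      have hlow : 1 - (1 - L) / 2 ≤ L := by
        rw [hL]
        refine Filter.le_liminf_of_le hbdd_le.isCoboundedUnder_ge ?_
        exact hev.mono fun t ht => ht.le
      linarith
    exact le_antisymm h1 h2
  have heq : ∀ᶠ δ in nhdsWithin 0 (Set.Ioi 0),
      (fun δ : ℝ => Filter.liminf
        (fun t : ℝ => (1 / t) *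
          ∫ s in (0 : ℝ)..t,
            (Metric.thickening δ C).indicator (fun _ => (1 : ℝ)) (φ s x))
        Filter.atTop) δ = 1 := by
    filter_upwards [self_mem_nhdsWithin] with δ hδ
    exact hkey δ hδ
  exact Filter.Tendsto.congr'
    (by filter_upwards [heq] with δ h; exact h.symm) tendsto_const_nhds
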